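/- arXiv:2311.17274 — 2 statements merged into one kernel-verified Lean document; each statement's English description precedes it below -/
import Mathlib

section
/- For every integer j with 1 ≤ j ≤ C, every f ∈ ℂ[X,Y] satisfying r·f = ζ^j f or r·f = ζ^{−j} f belongs to the ideal of ℂ[X,Y] generated by X^j and Y^j. -/
open MvPolynomial

noncomputable section

/-- The action of the generator `r` of the dihedral group `D_n` on `ℂ[X,Y]`:
the `ℂ`-algebra automorphism determined by `X ↦ ζ·X`, `Y ↦ ζ⁻¹·Y`. -/
def rAct (ζ : ℂ) : MvPolynomial (Fin 2) ℂ →ₐ[ℂ] MvPolynomial (Fin 2) ℂ :=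
  aeval ![ζ • X 0, ζ⁻¹ • X 1]

lemma rAct_monomial (ζ : ℂ) (d : Fin 2 →₀ ℕ) (c : ℂ) :
    rAct ζ (monomial d c) = C (ζ ^ (d 0) * ζ⁻¹ ^ (d 1)) * monomial d c := by
  rw [rAct, aeval_monomial, monomial_eq]
  rw [Finsupp.prod_fintype _ _ (fun i => pow_zero _),
      Finsupp.prod_fintype _ _ (fun i => pow_zero _)]
  simp only [Fin.prod_univ_two, Matrix.cons_val_zero, Matrix.cons_val_one, Matrix.head_cons,
    smul_pow, smul_eq_C_mul, algebraMap_eq, map_mul]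
  rw [C_pow, C_pow]
  ring

lemma coeff_rAct (ζ : ℂ) (f : MvPolynomial (Fin 2) ℂ) (d : Fin 2 →₀ ℕ) :
    coeff d (rAct ζ f) = ζ ^ (d 0) * ζ⁻¹ ^ (d 1) * coeff d f := by
  induction f using MvPolynomial.induction_on' with
  | monomial d' c =>
    rw [rAct_monomial, coeff_C_mul, coeff_monomial]
    split_ifs with h
    · subst h; rfl
    · ring
  | add p q hp hq =>
    rw [map_add, coeff_add, coeff_add, hp, hq]; ring

/-- Let `n ≥ 3` be odd, `ζ` a primitive `n`-th root of unity, `C = (n-1)/2`, and let `W = D_n`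
act on `ℂ[X,Y]` by `r·X = ζX`, `r·Y = ζ⁻¹Y`, `s·X = Y`, `s·Y = X`.  For every integer `j`
with `1 ≤ j ≤ C`, every `f ∈ ℂ[X,Y]` satisfying `r·f = ζʲ·f` or `r·f = ζ⁻ʲ·f` belongs
to the ideal generated by `Xʲ` and `Yʲ`. -/
theorem stmt_12 (n : ℕ) (hn : 3 ≤ n) (hodd : Odd n) (ζ : ℂ) (hζ : IsPrimitiveRoot ζ n)
    (j : ℕ) (hj : 1 ≤ j) (hjC : j ≤ (n - 1) / 2)
    (f : MvPolynomial (Fin 2) ℂ)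
    (hf : rAct ζ f = (ζ ^ (j : ℤ)) • f ∨ rAct ζ f = (ζ ^ (-(j : ℤ))) • f) :
    f ∈ Ideal.span {(X 0 : MvPolynomial (Fin 2) ℂ) ^ j, (X 1 : MvPolynomial (Fin 2) ℂ) ^ j} := by
  have hζ0 : ζ ≠ 0 := hζ.ne_zero (by omega)
  have h2j : 2 * j ≤ n - 1 := by
    obtain ⟨m, hm⟩ := hodd; omega
  -- key: every d in support has d 0 ≥ j or d 1 ≥ j
  have key : ∀ d ∈ f.support, j ≤ d 0 ∨ j ≤ d 1 := by
    intro d hd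
    by_contra h
    push_neg at h
    obtain ⟨h0, h1⟩ := h
    have hc : coeff d f ≠ 0 := mem_support_iff.mp hd
    obtain ⟨k, hk, heq⟩ : ∃ k : ℤ, (k = (j:ℤ) ∨ k = -(j:ℤ)) ∧
        ζ ^ ((d 0 : ℤ) - (d 1 : ℤ)) = ζ ^ k := by
      rcases hf with hf | hf
      · refine ⟨(j:ℤ), Or.inl rfl, ?_⟩
        have := congrArg (coeff d) hf
        rw [coeff_rAct, coeff_smul, smul_eq_mul] at this
        have h2 : ζ ^ (d 0) * ζ⁻¹ ^ (d 1) = ζ ^ ((j:ℕ):ℤ) :=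
          mul_right_cancel₀ hc this
        rw [← h2, sub_eq_add_neg, zpow_add₀ hζ0, zpow_natCast, zpow_neg, ← inv_zpow,
          zpow_natCast]
      · refine ⟨-(j:ℤ), Or.inr rfl, ?_⟩
        have := congrArg (coeff d) hf
        rw [coeff_rAct, coeff_smul, smul_eq_mul] at this
        have h2 : ζ ^ (d 0) * ζ⁻¹ ^ (d 1) = ζ ^ (-(j:ℤ)) := by
          exact mul_right_cancel₀ hc this
        rw [← h2, sub_eq_add_neg, zpow_add₀ hζ0, zpow_natCast, zpow_neg, ← inv_zpow,
          zpow_natCast]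
    have hdvd : (n : ℤ) ∣ ((d 0 : ℤ) - (d 1 : ℤ) - k) := by
      have : ζ ^ ((d 0 : ℤ) - (d 1 : ℤ) - k) = 1 := by
        rw [zpow_sub₀ hζ0, heq, div_self (zpow_ne_zero _ hζ0)]
      exact (hζ.zpow_eq_one_iff_dvd _).mp this
    have habs : |(d 0 : ℤ) - (d 1 : ℤ) - k| < n := by
      rcases hk with rfl | rfl <;> rw [abs_lt] <;> constructor <;>
        [skip; skip; skip; skip] <;> push_cast <;> omega
    have := Int.eq_zero_of_abs_lt_dvd hdvd habs
    rcases hk with rfl | rfl <;> omega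
  -- conclude
  rw [f.as_sum]
  refine Ideal.sum_mem _ (fun d hd => ?_)
  rcases key d hd with h | h
  · have : monomial d (coeff d f) =
        (X 0 : MvPolynomial (Fin 2) ℂ) ^ j * monomial (d - Finsupp.single 0 j) (coeff d f) := by
      rw [X_pow_eq_monomial, monomial_mul, one_mul,
        add_tsub_cancel_of_le (Finsupp.single_le_iff.mpr h)]
    rw [this]
    exact Ideal.mul_mem_right _ _ (Ideal.subset_span (by simp))
  · have : monomial d (coeff d f) =
        (X 1 : MvPolynomial (Fin 2) ℂ) ^ j * monomial (d - Finsupp.single 1 j) (coeff d f) := by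
      rw [X_pow_eq_monomial, monomial_mul, one_mul,
        add_tsub_cancel_of_le (Finsupp.single_le_iff.mpr h)]
    rw [this]
    exact Ideal.mul_mem_right _ _ (Ideal.subset_span (by simp))

end
end

section
/- Let n ≥ 3 be an odd integer and 1 ≤ j ≤ (n−1)/2. If a, b ∈ ℂ[X,Y] satisfy a·X^j + b·Y^j ∈ (X^n − Y^n)·ℂ[X,Y], then the pair (a, b) lies in the ℂ[X,Y]-submodule of ℂ[X,Y]² generated by (Y^j, −X^j) and (X^{n−j}, −Y^{n−j}). -/
open MvPolynomial

theorem primeX1' : Prime ((X 1 : MvPolynomial (Fin 2) ℂ)) := by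
  rw [← MulEquiv.prime_iff ((renameEquiv ℂ (Equiv.swap (0 : Fin 2) 1)).trans
        (finSuccEquiv ℂ 1)).toMulEquiv]
  have : ((renameEquiv ℂ (Equiv.swap (0 : Fin 2) 1)).trans
        (finSuccEquiv ℂ 1)).toMulEquiv (X 1) = Polynomial.X := by
    simp [renameEquiv_apply, rename_X, Equiv.swap_apply_right, finSuccEquiv_X_zero]
  rw [this]
  exact Polynomial.prime_X

/-- Let `n ≥ 3` be odd and `1 ≤ j ≤ (n-1)/2`.  If `a, b ∈ ℂ[X,Y]` satisfy
`a·Xʲ + b·Yʲ ∈ (Xⁿ - Yⁿ)·ℂ[X,Y]`, then the pair `(a, b)` lies in the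
`ℂ[X,Y]`-submodule of `ℂ[X,Y]²` generated by `(Yʲ, -Xʲ)` and `(X^{n-j}, -Y^{n-j})`. -/
theorem stmt_19 (n j : ℕ) (hn : 3 ≤ n) (hodd : Odd n) (hj : 1 ≤ j) (hjC : j ≤ (n - 1) / 2)
    (a b : MvPolynomial (Fin 2) ℂ)
    (h : a * X 0 ^ j + b * X 1 ^ j ∈ Ideal.span {(X 0 : MvPolynomial (Fin 2) ℂ) ^ n - X 1 ^ n}) :
    (a, b) ∈ Submodule.span (MvPolynomial (Fin 2) ℂ)
      {((X 1 : MvPolynomial (Fin 2) ℂ) ^ j, -(X 0 : MvPolynomial (Fin 2) ℂ) ^ j),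
       ((X 0 : MvPolynomial (Fin 2) ℂ) ^ (n - j), -(X 1 : MvPolynomial (Fin 2) ℂ) ^ (n - j))} := by
  have hjn : j ≤ n := by omega
  rw [Ideal.mem_span_singleton] at h
  obtain ⟨c, hc⟩ := h
  have e1 : (X 0 : MvPolynomial (Fin 2) ℂ) ^ (n - j) * X 0 ^ j = X 0 ^ n := by
    rw [← pow_add]; congr 1; omega
  have e2 : (X 1 : MvPolynomial (Fin 2) ℂ) ^ (n - j) * X 1 ^ j = X 1 ^ n := by
    rw [← pow_add]; congr 1; omega
  have hnd : ¬ (X 1 : MvPolynomial (Fin 2) ℂ) ∣ X 0 ^ j := by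
    rintro ⟨q, hq⟩
    have := congrArg (eval (fun i => if i = 0 then 1 else 0)) hq
    simp at this
  have hdvd : (X 1 : MvPolynomial (Fin 2) ℂ) ^ j ∣ (a - c * X 0 ^ (n - j)) := by
    refine primeX1'.pow_dvd_of_dvd_mul_left j hnd ⟨-b - c * X 1 ^ (n - j), ?_⟩
    linear_combination hc - c * e1 + c * e2
  obtain ⟨d, hd⟩ := hdvd
  have ha : a = d * X 1 ^ j + c * X 0 ^ (n - j) := by linear_combination hd
  have hb : b = d * (-(X 0 ^ j)) + c * (-(X 1 ^ (n - j))) := by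
    have hne : (X 1 : MvPolynomial (Fin 2) ℂ) ^ j ≠ 0 := pow_ne_zero _ (X_ne_zero 1)
    have : b * X 1 ^ j = (d * (-(X 0 ^ j)) + c * (-(X 1 ^ (n - j)))) * X 1 ^ j := by
      linear_combination hc - c * e1 + c * e2 - X 0 ^ j * ha
    exact mul_right_cancel₀ hne this
  rw [Submodule.mem_span_pair]
  refine ⟨d, c, ?_⟩
  rw [ha, hb]
  simp only [Prod.smul_mk, smul_eq_mul, Prod.mk_add_mk, Prod.mk.injEq]
end
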